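/- Let F : [0,∞) → [0,∞) be increasing and left-continuous with F(0) = 0, and define φ(y) = ∫₀^y F⁻¹(u) du and ψ(y) = ∫₀^{F⁻¹(y)} (√y − √{F(λ)})² dλ. Then φ(y/2) ≤ ψ(y) for all y ≥ 0. -/
import Mathlib

open MeasureTheory Set

/-- Inequality (14): for `F : [0,∞) → [0,∞)` increasing, left-continuous with
`F 0 = 0`, and `φ(y) = ∫₀^y F⁻¹(u) du`, `ψ(y) = ∫₀^{F⁻¹(y)} (√y − √(F λ))² dλ`,
one has `φ(y/2) ≤ ψ(y)` for all `y ≥ 0`. -/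
theorem stmt_4 (F : ℝ → ℝ) (hmono : Monotone F) (hnn : ∀ x, 0 ≤ F x)
    (hF0 : ∀ x ≤ (0:ℝ), F x = 0)
    (hleftcont : ∀ x, ContinuousWithinAt F (Set.Iio x) x)
    (Finv : ℝ → ℝ) (hFinv : ∀ u, 0 ≤ u → IsLUB {l : ℝ | 0 ≤ l ∧ F l ≤ u} (Finv u))
    (φ ψ : ℝ → ℝ)
    (hφ : ∀ y, φ y = ∫ u in (0:ℝ)..y, Finv u)
    (hψ : ∀ y, ψ y = ∫ l in (0:ℝ)..(Finv y), (Real.sqrt y - Real.sqrt (F l)) ^ 2)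
    (y : ℝ) (hy : 0 ≤ y) :
    φ (y / 2) ≤ ψ y := by
  have hFmeas : Measurable F := hmono.measurable
  set z := y / 2 with hz
  have hz0 : 0 ≤ z := by positivity
  have hzy : z ≤ y := by rw [hz]; linarith
  -- basic facts about Finv
  have hmem0 : ∀ u, 0 ≤ u → (0:ℝ) ∈ {l : ℝ | 0 ≤ l ∧ F l ≤ u} := fun u hu =>
    ⟨le_rfl, by rw [hF0 0 le_rfl]; exact hu⟩
  have hFinv_nonneg : ∀ u, 0 ≤ u → 0 ≤ Finv u := fun u hu => (hFinv u hu).1 (hmem0 u hu)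
  have hFinv_mono : ∀ u v, 0 ≤ u → u ≤ v → Finv u ≤ Finv v := fun u v hu huv =>
    (hFinv u hu).mono (hFinv v (hu.trans huv)) (fun l hl => ⟨hl.1, hl.2.trans huv⟩)
  have hkey : ∀ u, 0 ≤ u → ∀ l, l < Finv u → F l ≤ u := by
    intro u hu l hl
    obtain ⟨d, hd, hld⟩ := (lt_isLUB_iff (hFinv u hu)).1 hl
    exact (hmono hld.le).trans hd.2
  set c := Finv y with hcdef
  have hc0 : 0 ≤ c := hFinv_nonneg y hy
  set g : ℝ → ℝ := fun l => (Real.sqrt y - Real.sqrt (F l)) ^ 2 with hgdef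
  have hgmeas : Measurable g :=
    ((measurable_const.sub (Real.continuous_sqrt.measurable.comp hFmeas)).pow_const 2)
  have hgnn : ∀ l, 0 ≤ g l := fun l => sq_nonneg _
  -- pointwise inequality  z - F l ≤ g l
  have hptwise : ∀ l, z - F l ≤ g l := by
    intro l
    have h1 := Real.sq_sqrt hy
    have h2 := Real.sq_sqrt (hnn l)
    have h3 := Real.sqrt_nonneg y
    have h4 := Real.sqrt_nonneg (F l)
    simp only [hgdef, hz]
    nlinarith [sq_nonneg (Real.sqrt y - 2 * Real.sqrt (F l))]
  -- abbreviations for the two lintegrals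
  set L1 : ENNReal := ∫⁻ u in Ioc 0 z, ENNReal.ofReal (Finv u) with hL1
  set L2 : ENNReal := ∫⁻ l in Ioc 0 c, ENNReal.ofReal (g l) with hL2
  -- measurability of slices
  have hslice : ∀ u : ℝ, MeasurableSet {l : ℝ | F l ≤ u} := fun u =>
    measurableSet_le hFmeas measurable_const
  have hslice2 : ∀ l : ℝ, MeasurableSet {u : ℝ | F l ≤ u} := fun l =>
    measurableSet_le measurable_const measurable_id
  -- Tonelli
  have hSmeas : MeasurableSet {p : ℝ × ℝ | F p.2 ≤ p.1} :=
    measurableSet_le (hFmeas.comp measurable_snd) measurable_fst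
  have tonelli :
      (∫⁻ u in Ioc 0 z, volume ({l : ℝ | F l ≤ u} ∩ Ioc 0 c))
        = ∫⁻ l in Ioc 0 c, volume ({u : ℝ | F l ≤ u} ∩ Ioc 0 z) := by
    have h1 := Measure.prod_apply (μ := volume.restrict (Ioc (0:ℝ) z))
      (ν := volume.restrict (Ioc (0:ℝ) c)) hSmeas
    have h2 := Measure.prod_apply_symm (μ := volume.restrict (Ioc (0:ℝ) z))
      (ν := volume.restrict (Ioc (0:ℝ) c)) hSmeas
    rw [h1] at h2
    calc (∫⁻ u in Ioc 0 z, volume ({l : ℝ | F l ≤ u} ∩ Ioc 0 c))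
        = ∫⁻ u in Ioc 0 z, (volume.restrict (Ioc (0:ℝ) c)) (Prod.mk u ⁻¹' {p : ℝ × ℝ | F p.2 ≤ p.1}) := by
          refine lintegral_congr fun u => ?_
          have he : Prod.mk u ⁻¹' {p : ℝ × ℝ | F p.2 ≤ p.1} = {l : ℝ | F l ≤ u} := rfl
          rw [he, Measure.restrict_apply (hslice u)]
      _ = ∫⁻ l in Ioc 0 c, (volume.restrict (Ioc (0:ℝ) z)) ((fun u => (u, l)) ⁻¹' {p : ℝ × ℝ | F p.2 ≤ p.1}) := h2
      _ = ∫⁻ l in Ioc 0 c, volume ({u : ℝ | F l ≤ u} ∩ Ioc 0 z) := by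
          refine lintegral_congr fun l => ?_
          have he : (fun u => (u, l)) ⁻¹' {p : ℝ × ℝ | F p.2 ≤ p.1} = {u : ℝ | F l ≤ u} := rfl
          rw [he, Measure.restrict_apply (hslice2 l)]
  have step1 : L1 ≤ ∫⁻ u in Ioc 0 z, volume ({l : ℝ | F l ≤ u} ∩ Ioc 0 c) := by
    refine setLIntegral_mono' measurableSet_Ioc fun u hu => ?_
    have hu0 : 0 ≤ u := hu.1.le
    have hsub : Ioo 0 (Finv u) ⊆ {l : ℝ | F l ≤ u} ∩ Ioc 0 c := by
      intro l hl
      have hlc : l < c := lt_of_lt_of_le hl.2 (hFinv_mono u y hu0 (hu.2.trans hzy))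
      exact ⟨hkey u hu0 l hl.2, hl.1, hlc.le⟩
    calc ENNReal.ofReal (Finv u) = volume (Ioo 0 (Finv u)) := by
          rw [Real.volume_Ioo, sub_zero]
      _ ≤ _ := measure_mono hsub
  have step3 : (∫⁻ l in Ioc 0 c, volume ({u : ℝ | F l ≤ u} ∩ Ioc 0 z)) ≤ L2 := by
    refine setLIntegral_mono' measurableSet_Ioc fun l _ => ?_
    have hsub : {u : ℝ | F l ≤ u} ∩ Ioc 0 z ⊆ Icc (F l) z := fun u hu => ⟨hu.1, hu.2.2⟩
    calc volume ({u : ℝ | F l ≤ u} ∩ Ioc 0 z) ≤ volume (Icc (F l) z) := measure_mono hsub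
      _ = ENNReal.ofReal (z - F l) := Real.volume_Icc
      _ ≤ ENNReal.ofReal (g l) := ENNReal.ofReal_le_ofReal (hptwise l)
  have hchain : L1 ≤ L2 := step1.trans (le_of_eq tonelli |>.trans step3)
  -- L2 is finite
  have hL2top : L2 ≠ ⊤ := by
    have hb : ∀ l ∈ Ioc (0:ℝ) c, ENNReal.ofReal (g l)
        ≤ ENNReal.ofReal ((Real.sqrt y + Real.sqrt (F c)) ^ 2) := by
      intro l hl
      apply ENNReal.ofReal_le_ofReal
      have h1 : Real.sqrt (F l) ≤ Real.sqrt (F c) := Real.sqrt_le_sqrt (hmono hl.2)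
      have h3 := Real.sqrt_nonneg y
      have h4 := Real.sqrt_nonneg (F l)
      have h5 := Real.sqrt_nonneg (F c)
      simp only [hgdef]
      nlinarith
    have : L2 ≤ ENNReal.ofReal ((Real.sqrt y + Real.sqrt (F c)) ^ 2) * volume (Ioc 0 c) := by
      rw [hL2, ← setLIntegral_const]
      exact setLIntegral_mono' measurableSet_Ioc hb
    refine ne_top_of_le_ne_top ?_ this
    exact ENNReal.mul_ne_top ENNReal.ofReal_ne_top (by simp [Real.volume_Ioc])
  -- identify φ z and ψ y with toReal of the lintegrals
  have hFinvInt : IntegrableOn Finv (Ioc 0 z) := by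
    have hm : MonotoneOn Finv (uIcc 0 z) := by
      rw [uIcc_of_le hz0]
      intro a ha b hb hab
      exact hFinv_mono a b ha.1 hab
    exact (intervalIntegrable_iff_integrableOn_Ioc_of_le hz0).1 (hm.intervalIntegrable (μ := volume))
  have hφz : φ z = L1.toReal := by
    rw [hφ, intervalIntegral.integral_of_le hz0, hL1,
      integral_eq_lintegral_of_nonneg_ae
        ((ae_restrict_iff' measurableSet_Ioc).2 (ae_of_all _ fun u hu => hFinv_nonneg u hu.1.le))
        hFinvInt.aestronglyMeasurable]
  have hψy : ψ y = L2.toReal := by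
    rw [hψ, intervalIntegral.integral_of_le hc0, hL2,
      integral_eq_lintegral_of_nonneg_ae (ae_of_all _ fun l => hgnn l)
        hgmeas.aestronglyMeasurable.restrict]
  rw [hφz, hψy]
  exact ENNReal.toReal_mono hL2top hchain
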